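/- If k, m, n are positive integers with n > m and P_k = F_m · F_n, then |γ^k/(2√2) − α^{m+n}/5| ≤ 6·α^{n−m}/5. -/

import Mathlib

set_option maxHeartbeats 1000000

/-- The Pell sequence: P 0 = 0, P 1 = 1, P (n+2) = 2 * P (n+1) + P n. -/
def pell : ℕ → ℕ
  | 0 => 0
  | 1 => 1
  | n + 2 => 2 * pell (n + 1) + pell n

lemma pell_binet : ∀ k : ℕ,
    ((pell k : ℝ)) * (2 * Real.sqrt 2) = (1 + Real.sqrt 2) ^ k - (1 - Real.sqrt 2) ^ k
  | 0 => by simp [pell]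
  | 1 => by simp [pell]; ring
  | (k + 2) => by
    have h1 := pell_binet (k + 1)
    have h2 := pell_binet k
    have s2 : Real.sqrt 2 ^ 2 = 2 := Real.sq_sqrt (by norm_num)
    simp only [pell]
    push_cast
    linear_combination 2*h1 + h2 - ((1+Real.sqrt 2)^k - (1-Real.sqrt 2)^k) * s2

/-- If k, m, n are positive integers with n > m and P_k = F_m · F_n, then
|γ^k/(2√2) − α^{m+n}/5| ≤ 6·α^{n−m}/5, where α = (1+√5)/2 and γ = 1+√2. -/
theorem approx_PFF (k m n : ℕ) (hk : 0 < k) (hm : 0 < m) (hmn : n > m)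
    (h : pell k = Nat.fib m * Nat.fib n) :
    |(1 + Real.sqrt 2) ^ k / (2 * Real.sqrt 2) - ((1 + Real.sqrt 5) / 2) ^ (m + n) / 5|
      ≤ 6 * ((1 + Real.sqrt 5) / 2) ^ (n - m) / 5 := by
  have hs2 : Real.sqrt 2 ^ 2 = 2 := Real.sq_sqrt (by norm_num)
  have hs5 : Real.sqrt 5 ^ 2 = 5 := Real.sq_sqrt (by norm_num)
  have hs2lb : (1.4 : ℝ) < Real.sqrt 2 := by nlinarith [Real.sqrt_nonneg 2]
  have hs5lb : (2.2 : ℝ) < Real.sqrt 5 := by nlinarith [Real.sqrt_nonneg 5]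
  have hs5ub : Real.sqrt 5 < 2.3 := by nlinarith [Real.sqrt_nonneg 5]
  have hs2ub : Real.sqrt 2 < 1.5 := by nlinarith [Real.sqrt_nonneg 2]
  set s2 := Real.sqrt 2 with hs2def
  set s5 := Real.sqrt 5 with hs5def
  set A : ℝ := (1 + s5) / 2 with hA
  set B : ℝ := (1 - s5) / 2 with hB
  have hAB : A * B = -1 := by rw [hA, hB]; nlinarith
  have hA1 : (1 : ℝ) < A := by rw [hA]; nlinarith
  have hBabs : |B| < 1 := by
    rw [abs_lt, hB]; constructor <;> nlinarith
  -- Binet for fib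
  have hfib : ∀ j : ℕ, (Nat.fib j : ℝ) = (A ^ j - B ^ j) / s5 := by
    intro j
    have := Real.coe_fib_eq j
    rw [this, Real.goldenRatio, Real.goldenConj]
  -- Binet for pell
  have hpb := pell_binet k
  have h2s2 : (2 * s2) ≠ 0 := by positivity
  have hexp : (1 + s2) ^ k / (2 * s2)
      = (pell k : ℝ) + (1 - s2) ^ k / (2 * s2) := by
    field_simp
    linarith [hpb]
  -- rewrite pell k via h
  have hpk : (pell k : ℝ) = (A ^ m - B ^ m) * (A ^ n - B ^ n) / 5 := by
    have h55 : s5 * s5 = 5 := by nlinarith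
    rw [h]
    push_cast
    rw [hfib m, hfib n, div_mul_div_comm, h55]
  -- decompose n = m + d
  obtain ⟨d, rfl⟩ : ∃ d, n = m + d := ⟨n - m, by omega⟩
  have hnm : m + d - m = d := by omega
  rw [hnm]
  -- key quantities
  have hABm : A ^ m * B ^ m = (-1 : ℝ) ^ m := by
    rw [← mul_pow, hAB]
  have e1 : A ^ m * B ^ (m + d) = (-1 : ℝ) ^ m * B ^ d := by
    rw [pow_add, ← mul_assoc, hABm]
  have e2 : B ^ m * A ^ (m + d) = (-1 : ℝ) ^ m * A ^ d := by
    rw [pow_add, ← mul_assoc, mul_comm (B ^ m) (A ^ m), hABm]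
  -- bounds
  have hBd : |B ^ d| ≤ 1 := by
    rw [abs_pow]; exact pow_le_one₀ (abs_nonneg B) hBabs.le
  have hBmn : |B ^ (m + (m + d))| ≤ 1 := by
    rw [abs_pow]; exact pow_le_one₀ (abs_nonneg B) hBabs.le
  have hAd1 : (1 : ℝ) ≤ A ^ d := one_le_pow₀ hA1.le
  have hdel : |(1 - s2) ^ k| ≤ 1 := by
    rw [abs_pow]
    apply pow_le_one₀ (abs_nonneg _)
    rw [abs_le]; constructor <;> nlinarith
  -- the expression
  rw [hexp, hpk]
  have hmain : (A ^ m - B ^ m) * (A ^ (m + d) - B ^ (m + d)) / 5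
      + (1 - s2) ^ k / (2 * s2) - A ^ (m + (m + d)) / 5
      = (- ((-1:ℝ)^m * B ^ d) - ((-1:ℝ)^m * A ^ d) + B ^ (m + (m + d))) / 5
        + (1 - s2) ^ k / (2 * s2) := by
    rw [← e1, ← e2]
    field_simp
    ring
  rw [hmain]
  -- now bound by triangle inequality via nlinarith
  have habs1 := abs_le.mp hBd
  have habs2 := abs_le.mp hBmn
  have habs3 := abs_le.mp hdel
  have hsgn : (-1:ℝ)^m = 1 ∨ (-1:ℝ)^m = -1 := by
    rcases Nat.even_or_odd m with he | ho
    · exact Or.inl he.neg_one_pow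
    · exact Or.inr ho.neg_one_pow
  have hq : |(1 - s2) ^ k / (2 * s2)| ≤ 1/2 := by
    rw [abs_div, abs_of_pos (by positivity : (0:ℝ) < 2 * s2)]
    rw [div_le_iff₀ (by positivity)]
    nlinarith
  have habs4 := abs_le.mp hq
  rw [abs_le]
  rcases hsgn with hs | hs <;> rw [hs] <;> constructor <;> nlinarith
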